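/- Conversely, let K ⊆ M be closed convex and n a unit vector such that σn ∈ ∂K(n) where K(n) = {τn : τ ∈ K}. Then for any nonzero d in the normal cone of K(n) at σn, the symmetric matrix n ⊙ d = (n⊗d + d⊗n)/2 lies in the normal cone of K at σ. -/
import Mathlib


open Matrix

/-- Converse: if `σ ∈ K` (closed convex set of symmetric matrices), `n` is a
unit vector with `σn` on the boundary of `K(n) = {τn : τ ∈ K}`, and `d ≠ 0`
lies in the normal cone of `K(n)` at `σn`, then the symmetric matrix
`n ⊙ d = (n⊗d + d⊗n)/2` lies in the normal cone of `K` at `σ`. -/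
theorem boundary_stress_vector_gives_jump_compatible_normal
    (K : Set (Matrix (Fin 3) (Fin 3) ℝ))
    (hK_symm : ∀ τ ∈ K, τ.IsSymm)
    (hK_closed : IsClosed K) (hK_conv : Convex ℝ K)
    (σ : Matrix (Fin 3) (Fin 3) ℝ) (hσK : σ ∈ K)
    (n : Fin 3 → ℝ) (hn : n ⬝ᵥ n = 1)
    (hfr : σ *ᵥ n ∈ frontier {v | ∃ τ ∈ K, τ *ᵥ n = v})
    (d : Fin 3 → ℝ) (hd : d ≠ 0)
    (hnc : ∀ v ∈ {v : Fin 3 → ℝ | ∃ τ ∈ K, τ *ᵥ n = v}, (0 : ℝ) ≤ (σ *ᵥ n - v) ⬝ᵥ d) :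
    ∀ τ ∈ K, (0 : ℝ) ≤
      Matrix.trace ((σ - τ)ᵀ * ((1/2 : ℝ) • (vecMulVec n d + vecMulVec d n))) := by
  intro τ hτ
  have h := hnc (τ *ᵥ n) ⟨τ, hτ, rfl⟩
  have hσs := hK_symm σ hσK
  have hτs := hK_symm τ hτ
  have hs : ∀ i j, σ j i = σ i j := fun i j => by
    have := congrFun (congrFun hσs j) i
    simpa [Matrix.transpose_apply] using this.symm
  have ht : ∀ i j, τ j i = τ i j := fun i j => by
    have := congrFun (congrFun hτs j) i
    simpa [Matrix.transpose_apply] using this.symm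
  simp only [Matrix.trace, Matrix.diag, Matrix.mul_apply, Matrix.transpose_apply,
    Matrix.sub_apply, Matrix.smul_apply, Matrix.add_apply, vecMulVec_apply,
    dotProduct, Matrix.mulVec, Pi.sub_apply, smul_eq_mul,
    Fin.sum_univ_three] at h ⊢
  simp only [hs 0 1, hs 0 2, hs 1 2, ht 0 1, ht 0 2, ht 1 2] at h ⊢
  nlinarith [h]
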